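/- There exists a finitely generated pointed commutative monoid extension A ⊆ B that is finite but not integral. Specifically, let B be the pointed monoid generated by x, y subject to the relation y² = xy, and A the submonoid generated by x; then B = A ∪ A·y (so the extension is finite), but no power yⁿ (n ≥ 1) lies in A. -/

import Mathlib

/-- Model of the monoid generated by `x, y` with `y² = xy`:
`⟨a, false⟩ = x^a`, `⟨a, true⟩ = x^a * y`. -/
structure Mc where
  deg : ℕ
  hasY : Bool

namespace Mc

instance : Mul Mc := ⟨fun p q => ⟨p.deg + q.deg + (if p.hasY && q.hasY then 1 else 0),
  p.hasY || q.hasY⟩⟩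
instance : One Mc := ⟨⟨0, false⟩⟩

lemma mul_def (p q : Mc) :
    p * q = ⟨p.deg + q.deg + (if p.hasY && q.hasY then 1 else 0), p.hasY || q.hasY⟩ := rfl

lemma one_def : (1 : Mc) = ⟨0, false⟩ := rfl

instance : CommMonoid Mc where
  mul_assoc a b c := by
    obtain ⟨a, ha⟩ := a; obtain ⟨b, hb⟩ := b; obtain ⟨c, hc⟩ := c
    cases ha <;> cases hb <;> cases hc <;> simp [mul_def] <;> omega
  one_mul a := by obtain ⟨a, ha⟩ := a; cases ha <;> simp [mul_def, one_def]
  mul_one a := by obtain ⟨a, ha⟩ := a; cases ha <;> simp [mul_def, one_def]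
  mul_comm a b := by
    obtain ⟨a, ha⟩ := a; obtain ⟨b, hb⟩ := b
    cases ha <;> cases hb <;> simp [mul_def] <;> omega

lemma pow_x (a : ℕ) : (⟨1, false⟩ : Mc) ^ a = ⟨a, false⟩ := by
  induction a with
  | zero => rfl
  | succ n ih => rw [pow_succ, ih]; simp [mul_def]

lemma pow_y (n : ℕ) (hn : 1 ≤ n) : (⟨0, true⟩ : Mc) ^ n = ⟨n - 1, true⟩ := by
  induction n with
  | zero => omega
  | succ n ih =>
    rcases Nat.lt_or_ge 1 (n + 1) with h | h
    · rw [pow_succ, ih (by omega)]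
      simp [mul_def]
      omega
    · have : n = 0 := by omega
      subst this
      simp

lemma y_decomp (a : ℕ) : (⟨a, true⟩ : Mc) = (⟨a, false⟩ : Mc) * ⟨0, true⟩ := by
  simp [mul_def]

end Mc

/-- There is a finitely generated pointed commutative monoid
extension `A ⊆ B` that is finite but not integral: `B` is generated by two
elements `x, y` subject to `y² = x·y`, and `A` is the submonoid generated by
`x`; then `B = A ∪ A·y` (the extension is finite), but no power `yⁿ` (`n ≥ 1`)
lies in `A` (it is not `0` and not a product of `x`'s). -/
theorem exists_finite_not_integral_extension :
    ∃ (B : Type) (_ : CommMonoidWithZero B) (x y : B),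
      (∀ b : B, b = 0 ∨ b ∈ Submonoid.closure {x, y}) ∧
      y ^ 2 = x * y ∧
      (∀ b : B, b = 0 ∨ ∃ a ∈ Submonoid.closure {x}, b = a ∨ b = a * y) ∧
      (∀ n : ℕ, 1 ≤ n → y ^ n ≠ 0 ∧ y ^ n ∉ Submonoid.closure {x}) := by
  refine ⟨WithZero Mc, inferInstance, (↑(⟨1, false⟩ : Mc)), (↑(⟨0, true⟩ : Mc)),
    ?_, ?_, ?_, ?_⟩
  · intro b
    induction b using WithZero.recZeroCoe with
    | zero => exact Or.inl rfl
    | coe m =>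
      right
      have hx : (↑(⟨1, false⟩ : Mc) : WithZero Mc) ∈
          Submonoid.closure {(↑(⟨1, false⟩ : Mc) : WithZero Mc), ↑(⟨0, true⟩ : Mc)} :=
        Submonoid.subset_closure (by simp)
      have hy : (↑(⟨0, true⟩ : Mc) : WithZero Mc) ∈
          Submonoid.closure {(↑(⟨1, false⟩ : Mc) : WithZero Mc), ↑(⟨0, true⟩ : Mc)} :=
        Submonoid.subset_closure (by simp)
      obtain ⟨a, h⟩ := m
      cases h
      · have : (↑(⟨a, false⟩ : Mc) : WithZero Mc) = (↑(⟨1, false⟩ : Mc)) ^ a := by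
          rw [← WithZero.coe_pow, Mc.pow_x]
        rw [this]
        exact pow_mem hx a
      · have : (↑(⟨a, true⟩ : Mc) : WithZero Mc) =
            (↑(⟨1, false⟩ : Mc)) ^ a * ↑(⟨0, true⟩ : Mc) := by
          rw [← WithZero.coe_pow, Mc.pow_x, ← WithZero.coe_mul, ← Mc.y_decomp]
        rw [this]
        exact mul_mem (pow_mem hx a) hy
  · rw [← WithZero.coe_pow, ← WithZero.coe_mul]
    congr 1
  · intro b
    induction b using WithZero.recZeroCoe with
    | zero => exact Or.inl rfl
    | coe m =>
      right
      have hx : (↑(⟨1, false⟩ : Mc) : WithZero Mc) ∈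
          Submonoid.closure {(↑(⟨1, false⟩ : Mc) : WithZero Mc)} :=
        Submonoid.subset_closure (by simp)
      have hmem : ∀ a : ℕ, (↑(⟨a, false⟩ : Mc) : WithZero Mc) ∈
          Submonoid.closure {(↑(⟨1, false⟩ : Mc) : WithZero Mc)} := by
        intro a
        have : (↑(⟨a, false⟩ : Mc) : WithZero Mc) = (↑(⟨1, false⟩ : Mc)) ^ a := by
          rw [← WithZero.coe_pow, Mc.pow_x]
        rw [this]; exact pow_mem hx a
      obtain ⟨a, h⟩ := m
      cases h
      · exact ⟨↑(⟨a, false⟩ : Mc), hmem a, Or.inl rfl⟩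
      · refine ⟨↑(⟨a, false⟩ : Mc), hmem a, Or.inr ?_⟩
        rw [← WithZero.coe_mul, ← Mc.y_decomp]
  · intro n hn
    rw [← WithZero.coe_pow, Mc.pow_y n hn]
    refine ⟨WithZero.coe_ne_zero, ?_⟩
    intro hmem
    have hsub : Submonoid.closure {(↑(⟨1, false⟩ : Mc) : WithZero Mc)} ≤
        { carrier := {b : WithZero Mc | ∃ a : ℕ, b = ↑(⟨a, false⟩ : Mc)},
          one_mem' := ⟨0, rfl⟩,
          mul_mem' := by
            rintro _ _ ⟨a, rfl⟩ ⟨b, rfl⟩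
            exact ⟨a + b, by rw [← WithZero.coe_mul]; simp [Mc.mul_def]⟩ } := by
      rw [Submonoid.closure_le]
      rintro _ rfl
      exact ⟨1, rfl⟩
    obtain ⟨a, ha⟩ := hsub hmem
    have := WithZero.coe_inj.mp ha
    simpa using congrArg Mc.hasY this
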